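/- Let X be a real Hilbert space, g : X → X a κ-contraction with 0 ≤ κ < 1, and x_{j−2}, x_{j−1} ∈ X. Set w_{j−1} := g(x_{j−2}) − x_{j−2}, w_j := g(x_{j−1}) − x_{j−1} and e_{j−1} := x_{j−1} − x_{j−2}, and assume w_j ≠ w_{j−1}. If γ ∈ ℝ minimizes the function γ ↦ ‖w_j − γ(w_j − w_{j−1})‖ over ℝ, then |γ| · ‖e_{j−1}‖ ≤ (1 − κ)^{−1} ‖w_j‖. (This is the bound |α^j_{j−2}|‖e_{j−1}‖ ≤ (1−κ)^{−1}‖w_j‖ for the depth m = 1 Anderson optimization problem, whose constrained form minimizes ‖α_{j−2} w_{j−1} + α_{j−1} w_j‖ over α_{j−2} + α_{j−1} = 1 with α_{j−2} = γ.) -/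

import Mathlib

/-- depth `m = 1` Anderson bound `|γ| ‖e_{j-1}‖ ≤ (1-κ)⁻¹ ‖w_j‖`,
where `γ` minimizes `γ ↦ ‖w_j - γ (w_j - w_{j-1})‖` over `ℝ`. -/
theorem stmt_3 {X : Type*} [NormedAddCommGroup X] [InnerProductSpace ℝ X] [CompleteSpace X]
    (g : X → X) (κ : ℝ) (hκ0 : 0 ≤ κ) (hκ1 : κ < 1)
    (hg : ∀ x y : X, ‖g y - g x‖ ≤ κ * ‖x - y‖)
    (xjm2 xjm1 : X)
    (wjm1 wj : X) (hwjm1 : wjm1 = g xjm2 - xjm2) (hwj : wj = g xjm1 - xjm1)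
    (hne : wj ≠ wjm1)
    (γ : ℝ)
    (hmin : ∀ t : ℝ, ‖wj - γ • (wj - wjm1)‖ ≤ ‖wj - t • (wj - wjm1)‖) :
    |γ| * ‖xjm1 - xjm2‖ ≤ (1 - κ)⁻¹ * ‖wj‖ := by
  set d : X := wj - wjm1 with hd
  have hd0 : d ≠ 0 := sub_ne_zero.mpr hne
  have hdn : (0:ℝ) < ‖d‖ := norm_pos_iff.mpr hd0
  set c : ℝ := inner ℝ (wj - γ • d) d with hc
  -- orthogonality of the minimizer
  have hc0 : c = 0 := by
    have h := hmin (γ + c / ‖d‖ ^ 2)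
    have h2 : ‖wj - γ • d‖ ^ 2 ≤ ‖wj - (γ + c / ‖d‖ ^ 2) • d‖ ^ 2 :=
      pow_le_pow_left₀ (norm_nonneg _) h 2
    have hrw : wj - (γ + c / ‖d‖ ^ 2) • d = (wj - γ • d) - (c / ‖d‖ ^ 2) • d := by
      rw [add_smul]; abel
    have hrhs : ‖(wj - γ • d) - (c / ‖d‖ ^ 2) • d‖ ^ 2
        = ‖wj - γ • d‖ ^ 2 - 2 * ((c / ‖d‖ ^ 2) * c) + (c / ‖d‖ ^ 2) ^ 2 * ‖d‖ ^ 2 := by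
      rw [norm_sub_sq_real, real_inner_smul_right, ← hc, norm_smul, mul_pow,
        Real.norm_eq_abs, sq_abs]
    rw [hrw, hrhs] at h2
    have hp : (0:ℝ) < ‖d‖ ^ 2 := by positivity
    have h3 : 0 ≤ -2 * ((c / ‖d‖ ^ 2) * c) + (c / ‖d‖ ^ 2) ^ 2 * ‖d‖ ^ 2 := by linarith
    rw [div_pow] at h3
    have h4 : (c ^ 2 / (‖d‖ ^ 2) ^ 2) * ‖d‖ ^ 2 = c ^ 2 / ‖d‖ ^ 2 := by
      field_simp
    rw [h4] at h3
    have h5 : c / ‖d‖ ^ 2 * c = c ^ 2 / ‖d‖ ^ 2 := by ring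
    rw [h5] at h3
    have h6 : c ^ 2 / ‖d‖ ^ 2 ≤ 0 := by linarith
    have h7 : c ^ 2 ≤ 0 := by
      by_contra hcon
      push_neg at hcon
      exact absurd h6 (not_le.mpr (div_pos hcon hp))
    have hsq : c ^ 2 = 0 := le_antisymm h7 (sq_nonneg c)
    exact pow_eq_zero_iff (by norm_num) |>.mp hsq
  -- γ ⟪d,d⟫ = ⟪wj,d⟫
  have hγd : γ * ‖d‖ ^ 2 = inner ℝ wj d := by
    have : (inner ℝ (wj - γ • d) d : ℝ) = inner ℝ wj d - γ * inner ℝ d d := by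
      rw [inner_sub_left, real_inner_smul_left]
    rw [← hc, hc0] at this
    rw [← real_inner_self_eq_norm_sq]
    linarith
  have hCS : |γ| * ‖d‖ ≤ ‖wj‖ := by
    have h1 : |γ| * ‖d‖ ^ 2 = |(inner ℝ wj d : ℝ)| := by
      rw [← hγd, abs_mul, abs_of_nonneg (by positivity : (0:ℝ) ≤ ‖d‖ ^ 2)]
    have h2 : |(inner ℝ wj d : ℝ)| ≤ ‖wj‖ * ‖d‖ := abs_real_inner_le_norm wj d
    nlinarith [abs_nonneg γ]
  -- lower bound (1-κ)‖e‖ ≤ ‖d‖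
  have hlow : (1 - κ) * ‖xjm1 - xjm2‖ ≤ ‖d‖ := by
    have hdeq : d = (g xjm1 - g xjm2) - (xjm1 - xjm2) := by
      rw [hd, hwj, hwjm1]; abel
    have h1 : ‖d‖ = ‖(xjm1 - xjm2) - (g xjm1 - g xjm2)‖ := by
      rw [hdeq, norm_sub_rev]
    have h2 : ‖xjm1 - xjm2‖ - ‖g xjm1 - g xjm2‖ ≤ ‖(xjm1 - xjm2) - (g xjm1 - g xjm2)‖ :=
      norm_sub_norm_le _ _
    have h3 : ‖g xjm1 - g xjm2‖ ≤ κ * ‖xjm1 - xjm2‖ := by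
      have := hg xjm2 xjm1
      rwa [norm_sub_rev xjm2 xjm1] at this
    rw [h1]; nlinarith
  have hκp : (0:ℝ) < 1 - κ := by linarith
  have key : |γ| * ((1 - κ) * ‖xjm1 - xjm2‖) ≤ ‖wj‖ := le_trans
    (mul_le_mul_of_nonneg_left hlow (abs_nonneg γ)) hCS
  calc |γ| * ‖xjm1 - xjm2‖ = (|γ| * ((1 - κ) * ‖xjm1 - xjm2‖)) / (1 - κ) := by
        field_simp
    _ ≤ ‖wj‖ / (1 - κ) := div_le_div_of_nonneg_right key hκp.le
    _ = (1 - κ)⁻¹ * ‖wj‖ := by rw [div_eq_inv_mul]
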